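/- Let f(s) = log(1 + exp(s)). For w₁, w₂, c ∈ ℝ define K₁ = f(w₁+c) − f(c), K₂ = f(w₂+c) − f(c), K₁₂ = f(w₁+w₂+c) − f(w₁+c) − f(w₂+c) + f(c). If K₁ ≥ 0 and K₂ ≥ 0 then K₁₂ ≥ 0; if K₁ ≤ 0 and K₂ ≤ 0 then 0 ≤ K₁₂ ≤ min(−K₁, −K₂); if K₁ ≥ 0 and K₂ ≤ 0 then −K₁ ≤ K₁₂ ≤ 0. -/
import Mathlib

private lemma sp_pos (s : ℝ) : 0 < 1 + Real.exp s := by positivity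

private lemma sp_le_iff (s t : ℝ) :
    Real.log (1 + Real.exp s) ≤ Real.log (1 + Real.exp t) ↔ s ≤ t := by
  rw [Real.log_le_log_iff (sp_pos s) (sp_pos t)]
  constructor
  · intro h
    by_contra h'
    push_neg at h'
    nlinarith [Real.exp_lt_exp.2 h']
  · intro h
    nlinarith [Real.exp_le_exp.2 h]

private lemma sp_key (a b c : ℝ) (h : 0 ≤ (Real.exp a - 1) * (Real.exp b - 1)) :
    Real.log (1 + Real.exp (a + c)) + Real.log (1 + Real.exp (b + c)) ≤
      Real.log (1 + Real.exp (a + b + c)) + Real.log (1 + Real.exp c) := by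
  rw [← Real.log_mul (by positivity) (by positivity),
      ← Real.log_mul (by positivity) (by positivity),
      Real.log_le_log_iff (by positivity) (by positivity)]
  have e1 : Real.exp (a + c) = Real.exp a * Real.exp c := Real.exp_add a c
  have e2 : Real.exp (b + c) = Real.exp b * Real.exp c := Real.exp_add b c
  have e3 : Real.exp (a + b + c) = Real.exp a * Real.exp b * Real.exp c := by
    rw [show a + b + c = a + (b + c) by ring, Real.exp_add, Real.exp_add]; ring
  rw [e1, e2, e3]
  nlinarith [mul_nonneg h (Real.exp_pos c).le]

private lemma sp_key' (a b c : ℝ) (h : (Real.exp a - 1) * (Real.exp b - 1) ≤ 0) :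
    Real.log (1 + Real.exp (a + b + c)) + Real.log (1 + Real.exp c) ≤
      Real.log (1 + Real.exp (a + c)) + Real.log (1 + Real.exp (b + c)) := by
  rw [← Real.log_mul (by positivity) (by positivity),
      ← Real.log_mul (by positivity) (by positivity),
      Real.log_le_log_iff (by positivity) (by positivity)]
  have e1 : Real.exp (a + c) = Real.exp a * Real.exp c := Real.exp_add a c
  have e2 : Real.exp (b + c) = Real.exp b * Real.exp c := Real.exp_add b c
  have e3 : Real.exp (a + b + c) = Real.exp a * Real.exp b * Real.exp c := by
    rw [show a + b + c = a + (b + c) by ring, Real.exp_add, Real.exp_add]; ring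
  rw [e1, e2, e3]
  nlinarith [mul_nonneg (neg_nonneg.2 h) (Real.exp_pos c).le]

theorem two_input_softplus_coeff_inequalities (w₁ w₂ c : ℝ)
    (f : ℝ → ℝ) (hf : ∀ s, f s = Real.log (1 + Real.exp s))
    (K₁ K₂ K₁₂ : ℝ)
    (hK₁ : K₁ = f (w₁ + c) - f c)
    (hK₂ : K₂ = f (w₂ + c) - f c)
    (hK₁₂ : K₁₂ = f (w₁ + w₂ + c) - f (w₁ + c) - f (w₂ + c) + f c) :
    (0 ≤ K₁ → 0 ≤ K₂ → 0 ≤ K₁₂) ∧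
    (K₁ ≤ 0 → K₂ ≤ 0 → 0 ≤ K₁₂ ∧ K₁₂ ≤ min (-K₁) (-K₂)) ∧
    (0 ≤ K₁ → K₂ ≤ 0 → -K₁ ≤ K₁₂ ∧ K₁₂ ≤ 0) := by
  simp only [hf] at hK₁ hK₂ hK₁₂
  have hw1 : 0 ≤ K₁ ↔ 0 ≤ w₁ := by
    rw [hK₁, sub_nonneg, sp_le_iff]; constructor <;> intro h <;> linarith
  have hw2 : 0 ≤ K₂ ↔ 0 ≤ w₂ := by
    rw [hK₂, sub_nonneg, sp_le_iff]; constructor <;> intro h <;> linarith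
  have hw1' : K₁ ≤ 0 ↔ w₁ ≤ 0 := by
    rw [hK₁, sub_nonpos, sp_le_iff]; constructor <;> intro h <;> linarith
  have hw2' : K₂ ≤ 0 ↔ w₂ ≤ 0 := by
    rw [hK₂, sub_nonpos, sp_le_iff]; constructor <;> intro h <;> linarith
  refine ⟨?_, ?_, ?_⟩
  · intro h1 h2
    have h1' := hw1.1 h1
    have h2' := hw2.1 h2
    have := sp_key w₁ w₂ c (mul_nonneg (by nlinarith [Real.one_le_exp h1'])
      (by nlinarith [Real.one_le_exp h2']))
    linarith [hK₁₂]
  · intro h1 h2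
    have h1' := hw1'.1 h1
    have h2' := hw2'.1 h2
    have hp : 0 ≤ (Real.exp w₁ - 1) * (Real.exp w₂ - 1) :=
      by nlinarith [Real.exp_le_one_iff.2 h1', Real.exp_le_one_iff.2 h2']
    have hkey := sp_key w₁ w₂ c hp
    constructor
    · linarith [hK₁₂]
    · rw [le_min_iff]
      constructor
      · have : Real.log (1 + Real.exp (w₁ + w₂ + c)) ≤ Real.log (1 + Real.exp (w₂ + c)) :=
          (sp_le_iff _ _).2 (by linarith)
        linarith [hK₁₂, hK₁]
      · have : Real.log (1 + Real.exp (w₁ + w₂ + c)) ≤ Real.log (1 + Real.exp (w₁ + c)) :=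
          (sp_le_iff _ _).2 (by linarith)
        linarith [hK₁₂, hK₂]
  · intro h1 h2
    have h1' := hw1.1 h1
    have h2' := hw2'.1 h2
    have hp : (Real.exp w₁ - 1) * (Real.exp w₂ - 1) ≤ 0 :=
      mul_nonpos_of_nonneg_of_nonpos
        (by nlinarith [Real.one_le_exp h1'])
        (by nlinarith [Real.exp_le_one_iff.2 h2'])
    have hkey := sp_key' w₁ w₂ c hp
    constructor
    · have : Real.log (1 + Real.exp (w₂ + c)) ≤ Real.log (1 + Real.exp (w₁ + w₂ + c)) :=
        (sp_le_iff _ _).2 (by linarith)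
      linarith [hK₁₂, hK₁]
    · linarith [hK₁₂]
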